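/- Let H(x,μ) = ∫ l(t,x+y) μ(dy) with l bi-Lipschitz in y (constants κ_low, κ_up) and κ_up-Lipschitz. Suppose ψ* and ψ̄* satisfy H(ψ*, ν) = 0 and H(ψ̄*, ν^N) = 0 for probability measures ν, ν^N with finite first moments. Then |ψ* − ψ̄*| ≤ (κ_up/κ_low) · W₁(ν^N, ν), where W₁ is the 1-Wasserstein distance. -/

import Mathlib

open MeasureTheory

/-- Stability of the root of `H(·, μ) = 0` in the measure argument:
`|ψ* − ψ̄*| ≤ (κ_up/κ_low) W₁(ν^N, ν)`, using the Kantorovich–Rubinstein dual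
characterization of `W₁`. -/
theorem stmt14
    (l : ℝ → ℝ) (κl κu : ℝ) (hκl : 0 < κl) (hκ : κl ≤ κu)
    (hmeas : Measurable l)
    (hmono : Monotone l)
    (hbilip : ∀ y1 y2 : ℝ,
      κl * |y1 - y2| ≤ |l y1 - l y2| ∧ |l y1 - l y2| ≤ κu * |y1 - y2|)
    (ν νN : Measure ℝ) [IsProbabilityMeasure ν] [IsProbabilityMeasure νN]
    (hint1 : ∀ x : ℝ, Integrable (fun y => l (x + y)) ν)
    (hint2 : ∀ x : ℝ, Integrable (fun y => l (x + y)) νN)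
    (W1 : ℝ) (hW1 : 0 ≤ W1)
    (hdual : ∀ (g : ℝ → ℝ) (Kg : NNReal), LipschitzWith Kg g →
      Integrable g ν → Integrable g νN →
      |(∫ y, g y ∂ν) - ∫ y, g y ∂νN| ≤ (Kg : ℝ) * W1)
    (ψs ψbs : ℝ)
    (hψ : (∫ y, l (ψs + y) ∂ν) = 0)
    (hψb : (∫ y, l (ψbs + y) ∂νN) = 0) :
    |ψs - ψbs| ≤ (κu / κl) * W1 := by
  have hκu0 : 0 ≤ κu := le_trans hκl.le hκ
  have hlip : LipschitzWith ⟨κu, hκu0⟩ (fun y => l (ψs + y)) := by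
    apply LipschitzWith.of_dist_le_mul
    intro a b
    simp only [Real.dist_eq]
    calc |l (ψs + a) - l (ψs + b)| ≤ κu * |(ψs + a) - (ψs + b)| := (hbilip _ _).2
      _ = κu * |a - b| := by ring_nf
  have hdual' := hdual _ ⟨κu, hκu0⟩ hlip (hint1 ψs) (hint2 ψs)
  rw [hψ] at hdual'
  set I := ∫ y, l (ψs + y) ∂νN with hI
  have h1 : |I| ≤ κu * W1 := by
    have h' : |0 - I| ≤ κu * W1 := hdual'
    simpa [abs_sub_comm] using h'
  have hsub : Integrable (fun y => l (ψs + y) - l (ψbs + y)) νN :=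
    (hint2 ψs).sub (hint2 ψbs)
  have hsubint : ∫ y, (l (ψs + y) - l (ψbs + y)) ∂νN = I := by
    rw [integral_sub (hint2 ψs) (hint2 ψbs), hψb, ← hI, sub_zero]
  have h2 : κl * |ψs - ψbs| ≤ |I| := by
    rcases le_total ψbs ψs with h | h
    · have hpt : ∀ y, κl * (ψs - ψbs) ≤ l (ψs + y) - l (ψbs + y) := by
        intro y
        have hb := (hbilip (ψs + y) (ψbs + y)).1
        have hm : l (ψbs + y) ≤ l (ψs + y) := hmono (by linarith)
        have he : |ψs + y - (ψbs + y)| = ψs - ψbs := by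
          rw [abs_of_nonneg (by linarith)]; ring
        rw [he, abs_of_nonneg (by linarith)] at hb
        linarith
      have hmonoI : κl * (ψs - ψbs) ≤ I := by
        calc κl * (ψs - ψbs) = ∫ _, κl * (ψs - ψbs) ∂νN := by
              simp
          _ ≤ ∫ y, (l (ψs + y) - l (ψbs + y)) ∂νN :=
              integral_mono (integrable_const _) hsub hpt
          _ = I := hsubint
      rw [abs_of_nonneg (by linarith : (0:ℝ) ≤ ψs - ψbs)]
      exact hmonoI.trans (le_abs_self I)
    · have hpt : ∀ y, κl * (ψbs - ψs) ≤ l (ψbs + y) - l (ψs + y) := by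
        intro y
        have hb := (hbilip (ψbs + y) (ψs + y)).1
        have hm : l (ψs + y) ≤ l (ψbs + y) := hmono (by linarith)
        have he : |ψbs + y - (ψs + y)| = ψbs - ψs := by
          rw [abs_of_nonneg (by linarith)]; ring
        rw [he, abs_of_nonneg (by linarith)] at hb
        linarith
      have hmonoI : κl * (ψbs - ψs) ≤ -I := by
        calc κl * (ψbs - ψs) = ∫ _, κl * (ψbs - ψs) ∂νN := by
              simp
          _ ≤ ∫ y, (l (ψbs + y) - l (ψs + y)) ∂νN :=
              integral_mono (integrable_const _) ((hint2 ψbs).sub (hint2 ψs)) hpt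
          _ = -I := by
              rw [integral_sub (hint2 ψbs) (hint2 ψs), hψb, ← hI, zero_sub]
      rw [abs_of_nonpos (by linarith : ψs - ψbs ≤ 0)]
      have : -I ≤ |I| := neg_le_abs I
      calc κl * -(ψs - ψbs) = κl * (ψbs - ψs) := by ring
        _ ≤ -I := hmonoI
        _ ≤ |I| := this
  rw [div_mul_eq_mul_div, le_div_iff₀ hκl]
  nlinarith [abs_nonneg (ψs - ψbs)]
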